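/- Adversary lower bound: Any deterministic algorithm that identifies a Condorcet winning team by performing duels between disjoint k-subsets of [n] (receiving the winner as feedback) must, in the worst case over consistent strict total orders on teams, perform at least n - 2k duels. -/

import Mathlib

/-- A hidden ground-truth order: a strict total order on k-subsets of [n]
satisfying consistency. -/
def GroundOrder (n k : ℕ) (succ : Finset (Fin n) → Finset (Fin n) → Prop) : Prop :=
  (∀ A B, succ A B → ¬ succ B A) ∧
  (∀ A B C, succ A B → succ B C → succ A C) ∧
  (∀ A B : Finset (Fin n), A.card = k → B.card = k → A ≠ B → (succ A B ∨ succ B A)) ∧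
  (∀ x y : Fin n, x ≠ y →
    (∀ S : Finset (Fin n), S.card = k-1 → x ∉ S → y ∉ S → succ (insert x S) (insert y S)) ∨
    (∀ S : Finset (Fin n), S.card = k-1 → x ∉ S → y ∉ S → succ (insert y S) (insert x S)))

open Classical in
/-- The transcript of answers obtained by a deterministic algorithm `alg` (mapping a
history of boolean duel outcomes either to the next duel or to an output team) after
`t` steps against the order `succ`. -/
noncomputable def transcript (n : ℕ)
    (succ : Finset (Fin n) → Finset (Fin n) → Prop)
    (alg : List Bool → (Finset (Fin n) × Finset (Fin n)) ⊕ Finset (Fin n)) :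
    ℕ → List Bool
  | 0 => []
  | t+1 =>
      let r := transcript n succ alg t
      match alg r with
      | Sum.inl q => r ++ [decide (succ q.1 q.2)]
      | Sum.inr _ => r


open Finset
open scoped symmDiff

/-- Rank of a player induced by a list of "fixed worst" players:
players in the list are ranked by their position; all others rank above. -/
def rkOf (n : ℕ) (M : List (Fin n)) (i : Fin n) : ℕ :=
  if i ∈ M then M.idxOf i else n + i.val

/-- Order-reversing relabeling. -/
def fmOf (n : ℕ) (M : List (Fin n)) (i : Fin n) : ℕ := 2*n - rkOf n M i

/-- The ground order induced by a fixed-worst list `M`. -/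
def asucc (n : ℕ) (M : List (Fin n)) (A B : Finset (Fin n)) : Prop :=
  toColex (A.image (fmOf n M)) < toColex (B.image (fmOf n M))

lemma rkOf_lt (n : ℕ) {M : List (Fin n)} (hM : M.Nodup) (i : Fin n) :
    rkOf n M i < 2*n := by
  unfold rkOf
  split
  · calc M.idxOf i < M.length := List.idxOf_lt_length_iff.2 ‹_›
    _ ≤ n := by simpa using hM.length_le_card
    _ ≤ 2*n := by omega
  · have := i.isLt; omega

lemma rkOf_inj (n : ℕ) {M : List (Fin n)} (hM : M.Nodup) :
    Function.Injective (rkOf n M) := by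
  intro i j h
  unfold rkOf at h
  have hlen : M.length ≤ n := by simpa using hM.length_le_card
  split at h <;> split at h
  · exact (List.idxOf_inj ‹_›).1 h
  · have : M.idxOf i < M.length := List.idxOf_lt_length_iff.2 ‹_›
    omega
  · have : M.idxOf j < M.length := List.idxOf_lt_length_iff.2 ‹_›
    omega
  · exact Fin.val_injective (by omega)

lemma fmOf_inj (n : ℕ) {M : List (Fin n)} (hM : M.Nodup) :
    Function.Injective (fmOf n M) := by
  intro i j h
  apply rkOf_inj n hM
  have hi := rkOf_lt n hM i
  have hj := rkOf_lt n hM j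
  unfold fmOf at h; omega

lemma fmOf_lt_iff (n : ℕ) {M : List (Fin n)} (hM : M.Nodup) {i j : Fin n} :
    fmOf n M i < fmOf n M j ↔ rkOf n M j < rkOf n M i := by
  have hi := rkOf_lt n hM i
  have hj := rkOf_lt n hM j
  unfold fmOf; omega

/-- Sufficient condition for colex lt. -/
lemma colex_lt_of_max {s t : Finset ℕ} {m : ℕ} (hmt : m ∈ t) (hms : m ∉ s)
    (hmax : ∀ b ∈ s, b ∉ t → b ≤ m) : toColex s < toColex t := by
  rw [Finset.Colex.toColex_lt_toColex_iff_exists_forall_lt]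
  exact ⟨m, hmt, hms, fun b hb hbt => lt_of_le_of_ne (hmax b hb hbt)
    (fun h => hms (h ▸ hb))⟩

/-- Core: the answer of the order `asucc n M` on a duel `(A, B)` is decided by the
minimum-rank element of the symmetric difference. -/
lemma asucc_iff_of_min (n : ℕ) {M : List (Fin n)} (hM : M.Nodup)
    {A B : Finset (Fin n)} {z : Fin n} (hz : z ∈ A ∆ B)
    (hmin : ∀ w ∈ A ∆ B, rkOf n M z ≤ rkOf n M w) :
    asucc n M A B ↔ z ∈ B := by
  have key : ∀ C D : Finset (Fin n), z ∈ D → z ∉ C → C ∆ D = A ∆ B →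
      asucc n M C D := by
    intro C D hzD hzC hCD
    apply colex_lt_of_max (m := fmOf n M z)
    · exact Finset.mem_image_of_mem _ hzD
    · intro h
      obtain ⟨a, ha, hfa⟩ := Finset.mem_image.1 h
      exact hzC ((fmOf_inj n hM hfa) ▸ ha)
    · intro b hb hbD
      obtain ⟨w, hw, rfl⟩ := Finset.mem_image.1 hb
      have hwD : w ∉ D := fun hwD => hbD (Finset.mem_image_of_mem _ hwD)
      have hwΔ : w ∈ A ∆ B := hCD ▸ Finset.mem_symmDiff.2 (Or.inl ⟨hw, hwD⟩)
      have := hmin w hwΔ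
      have hle := (fmOf_lt_iff n hM (i := z) (j := w)).2
      by_cases hwz : w = z
      · exact le_of_eq (by rw [hwz])
      · have : rkOf n M z < rkOf n M w :=
          lt_of_le_of_ne this (fun h => hwz (rkOf_inj n hM h.symm))
        exact le_of_lt ((fmOf_lt_iff n hM).2 this)
  rcases Finset.mem_symmDiff.1 hz with ⟨hzA, hzB⟩ | ⟨hzB, hzA⟩
  · constructor
    · intro h
      exact absurd h (lt_asymm (key B A hzA hzB (symmDiff_comm A B ▸ rfl)))
    · intro h; exact absurd h hzB
  · exact ⟨fun _ => hzB, fun _ => key A B hzB hzA rfl⟩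

lemma asucc_groundOrder (n k : ℕ) {M : List (Fin n)} (hM : M.Nodup) :
    GroundOrder n k (asucc n M) := by
  refine ⟨fun A B h => lt_asymm h, fun A B C h1 h2 => lt_trans h1 h2, ?_, ?_⟩
  · intro A B _ _ hAB
    have : A.image (fmOf n M) ≠ B.image (fmOf n M) := by
      intro h
      exact hAB (Finset.image_injective (fmOf_inj n hM) h)
    rcases lt_or_gt_of_ne (fun h => this (toColex_inj.1 h)) with h | h
    · exact Or.inl h
    · exact Or.inr h
  · intro x y hxy
    have hfx : fmOf n M x ≠ fmOf n M y := fun h => hxy (fmOf_inj n hM h)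
    have ins : ∀ (a b : Fin n) (S : Finset (Fin n)), a ∉ S → b ∉ S →
        fmOf n M a < fmOf n M b → asucc n M (insert a S) (insert b S) := by
      intro a b S haS hbS hab
      unfold asucc
      rw [Finset.image_insert, Finset.image_insert]
      rw [Finset.Colex.insert_lt_insert]
      · exact hab
      · intro h
        obtain ⟨w, hw, hfw⟩ := Finset.mem_image.1 h
        exact haS ((fmOf_inj n hM hfw) ▸ hw)
      · intro h
        obtain ⟨w, hw, hfw⟩ := Finset.mem_image.1 h
        exact hbS ((fmOf_inj n hM hfw) ▸ hw)
    rcases lt_or_gt_of_ne hfx with h | h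
    · exact Or.inl (fun S _ hxS hyS => ins x y S hxS hyS h)
    · exact Or.inr (fun S _ hxS hyS => ins y x S hyS hxS h)

/-! ### The adversary run -/

/-- First element of the list lying in `D`. -/
def firstIn {n : ℕ} (D : Finset (Fin n)) : List (Fin n) → Option (Fin n)
  | [] => none
  | a :: l => if a ∈ D then some a else firstIn D l

lemma firstIn_none {n : ℕ} {D : Finset (Fin n)} :
    ∀ {L : List (Fin n)}, firstIn D L = none → ∀ w ∈ L, w ∉ D := by
  intro L
  induction L with
  | nil => intro _ w hw; simp at hw
  | cons a l ih =>
    intro h w hw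
    rw [firstIn] at h
    split at h
    · exact absurd h (by simp)
    · rcases List.mem_cons.1 hw with rfl | hw
      · assumption
      · exact ih h w hw

lemma firstIn_some {n : ℕ} {D : Finset (Fin n)} :
    ∀ {L : List (Fin n)} {z : Fin n}, firstIn D L = some z →
      z ∈ D ∧ ∃ l1 l2, L = l1 ++ z :: l2 ∧ ∀ w ∈ l1, w ∉ D := by
  intro L
  induction L with
  | nil => intro z h; simp [firstIn] at h
  | cons a l ih =>
    intro z h
    rw [firstIn] at h
    split at h
    · cases h
      exact ⟨‹_›, [], l, rfl, by simp⟩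
    · obtain ⟨hz, l1, l2, rfl, hl1⟩ := ih h
      exact ⟨hz, a :: l1, l2, rfl, by
        intro w hw
        rcases List.mem_cons.1 hw with rfl | hw
        · assumption
        · exact hl1 w hw⟩

open scoped symmDiff in
/-- The adversary run: the history of answers together with the list of
players fixed (in order) as the worst so far. -/
noncomputable def advrun (n : ℕ)
    (alg : List Bool → (Finset (Fin n) × Finset (Fin n)) ⊕ Finset (Fin n)) :
    ℕ → List Bool × List (Fin n)
  | 0 => ([], [])
  | t+1 =>
    match alg (advrun n alg t).1 with
    | Sum.inr _ => advrun n alg t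
    | Sum.inl q =>
      match firstIn (q.1 ∆ q.2) (advrun n alg t).2 with
      | some z => ((advrun n alg t).1 ++ [decide (z ∈ q.2)], (advrun n alg t).2)
      | none =>
        if hD : (q.1 ∆ q.2).Nonempty then
          ((advrun n alg t).1 ++ [decide ((q.1 ∆ q.2).min' hD ∈ q.2)],
            (advrun n alg t).2 ++ [(q.1 ∆ q.2).min' hD])
        else ((advrun n alg t).1 ++ [false], (advrun n alg t).2)

open scoped symmDiff

lemma rk_head_min {n : ℕ} {M : List (Fin n)} (hM : M.Nodup) {l1 l2 : List (Fin n)} {z : Fin n}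
    (hMe : M = l1 ++ z :: l2) {D : Finset (Fin n)} (hz : z ∈ D)
    (hl1 : ∀ w ∈ l1, w ∉ D) : ∀ w ∈ D, rkOf n M z ≤ rkOf n M w := by
  have hlen : M.length ≤ n := by simpa using hM.length_le_card
  have hzM : z ∈ M := by rw [hMe]; simp
  have hzl1 : z ∉ l1 := fun h => hl1 z h hz
  have hl1len : l1.length < M.length := by
    rw [hMe, List.length_append, List.length_cons]; omega
  have hrz : rkOf n M z = l1.length := by
    unfold rkOf
    rw [if_pos hzM]
    simp [hMe, List.idxOf_append_of_notMem hzl1]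
  intro w hw
  rw [hrz]
  unfold rkOf
  split
  · have hwl1 : w ∉ l1 := fun h => hl1 w h hw
    rw [hMe, List.idxOf_append_of_notMem hwl1]
    omega
  · omega

open Classical in
/-- Each step: frozen on output; otherwise one answer is appended, the fixed list grows by
at most one new element, and the answer agrees with `asucc n M` for every nodup `M`
extending the new fixed list. -/
lemma advrun_step (n : ℕ) (alg : List Bool → (Finset (Fin n) × Finset (Fin n)) ⊕ Finset (Fin n))
    (t : ℕ) :
    (∀ W, alg (advrun n alg t).1 = Sum.inr W → advrun n alg (t+1) = advrun n alg t) ∧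
    (∀ q, alg (advrun n alg t).1 = Sum.inl q →
      ∃ b, (advrun n alg (t+1)).1 = (advrun n alg t).1 ++ [b] ∧
        ((advrun n alg (t+1)).2 = (advrun n alg t).2 ∨
          ∃ z, z ∉ (advrun n alg t).2 ∧ (advrun n alg (t+1)).2 = (advrun n alg t).2 ++ [z]) ∧
        ∀ M : List (Fin n), M.Nodup → (advrun n alg (t+1)).2 <+: M →
          decide (asucc n M q.1 q.2) = b) := by
  constructor
  · intro W h
    rw [advrun, h]
  · intro q h
    rcases hf : firstIn (q.1 ∆ q.2) (advrun n alg t).2 with _ | z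
    · by_cases hD : (q.1 ∆ q.2).Nonempty
      · have e : advrun n alg (t+1) =
            ((advrun n alg t).1 ++ [decide ((q.1 ∆ q.2).min' hD ∈ q.2)],
              (advrun n alg t).2 ++ [(q.1 ∆ q.2).min' hD]) := by
          rw [advrun, h]; simp only [hf]; rw [dif_pos hD]
        refine ⟨_, by rw [e], Or.inr ⟨_, ?_, by rw [e]⟩, ?_⟩
        · intro hmem
          exact firstIn_none hf _ hmem (Finset.min'_mem _ hD)
        · intro M hM hpre
          rw [e] at hpre
          obtain ⟨r, hr⟩ := hpre
          have hle : asucc n M q.1 q.2 ↔ (q.1 ∆ q.2).min' hD ∈ q.2 := by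
            apply asucc_iff_of_min n hM (Finset.min'_mem _ hD)
            apply rk_head_min hM (l1 := (advrun n alg t).2) (l2 := r)
            · rw [← hr]; simp
            · exact Finset.min'_mem _ hD
            · exact firstIn_none hf
          exact decide_eq_decide.2 hle
      · have hq : q.1 = q.2 := by
          rw [Finset.not_nonempty_iff_eq_empty] at hD
          have := symmDiff_eq_bot.1 hD
          exact this
        have e : advrun n alg (t+1) = ((advrun n alg t).1 ++ [false], (advrun n alg t).2) := by
          rw [advrun, h]; simp only [hf]; rw [dif_neg hD]
        refine ⟨false, by rw [e], Or.inl (by rw [e]), ?_⟩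
        intro M hM _
        have : ¬ asucc n M q.1 q.2 := by rw [hq]; exact lt_irrefl _
        exact decide_eq_false this
    · obtain ⟨hz, l1, l2, hL, hl1⟩ := firstIn_some hf
      have e : advrun n alg (t+1) =
          ((advrun n alg t).1 ++ [decide (z ∈ q.2)], (advrun n alg t).2) := by
        rw [advrun, h]; simp only [hf]
      refine ⟨_, by rw [e], Or.inl (by rw [e]), ?_⟩
      intro M hM hpre
      rw [e] at hpre
      obtain ⟨r, hr⟩ := hpre
      have hle : asucc n M q.1 q.2 ↔ z ∈ q.2 := by
        apply asucc_iff_of_min n hM hz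
        apply rk_head_min hM (l1 := l1) (l2 := l2 ++ r)
        · rw [← hr]; simp [hL]
        · exact hz
        · exact hl1
      exact decide_eq_decide.2 hle

lemma advrun_prefix (n : ℕ) (alg : List Bool → (Finset (Fin n) × Finset (Fin n)) ⊕ Finset (Fin n))
    {s t : ℕ} (h : s ≤ t) : (advrun n alg s).2 <+: (advrun n alg t).2 := by
  induction t with
  | zero => rw [Nat.le_zero.1 h]
  | succ t ih =>
    by_cases h' : s ≤ t
    · refine (ih h').trans ?_
      rcases ha : alg (advrun n alg t).1 with q | W
      · obtain ⟨b, _, h2, _⟩ := (advrun_step n alg t).2 q ha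
        rcases h2 with h2 | ⟨z, _, h2⟩
        · rw [h2]
        · rw [h2]; exact List.prefix_append _ _
      · rw [(advrun_step n alg t).1 W ha]
    · have : s = t + 1 := by omega
      rw [this]

lemma advrun_nodup (n : ℕ) (alg : List Bool → (Finset (Fin n) × Finset (Fin n)) ⊕ Finset (Fin n))
    (t : ℕ) : (advrun n alg t).2.Nodup := by
  induction t with
  | zero => simp [advrun]
  | succ t ih =>
    rcases ha : alg (advrun n alg t).1 with q | W
    · obtain ⟨b, _, h2, _⟩ := (advrun_step n alg t).2 q ha
      rcases h2 with h2 | ⟨z, hz, h2⟩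
      · rw [h2]; exact ih
      · rw [h2]
        simpa [List.nodup_append] using ⟨ih, fun a ha h => hz (h ▸ ha)⟩
    · rw [(advrun_step n alg t).1 W ha]; exact ih

lemma advrun_len (n : ℕ) (alg : List Bool → (Finset (Fin n) × Finset (Fin n)) ⊕ Finset (Fin n))
    (t : ℕ) : (advrun n alg t).2.length ≤ (advrun n alg t).1.length := by
  induction t with
  | zero => simp [advrun]
  | succ t ih =>
    rcases ha : alg (advrun n alg t).1 with q | W
    · obtain ⟨b, h1, h2, _⟩ := (advrun_step n alg t).2 q ha
      rcases h2 with h2 | ⟨z, _, h2⟩ <;> rw [h2, h1] <;> simp <;> omega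
    · rw [(advrun_step n alg t).1 W ha]; exact ih

lemma advrun_frozen (n : ℕ)
    (alg : List Bool → (Finset (Fin n) × Finset (Fin n)) ⊕ Finset (Fin n))
    {m : ℕ} {W : Finset (Fin n)} (h : alg (advrun n alg m).1 = Sum.inr W) :
    ∀ t, m ≤ t → advrun n alg t = advrun n alg m := by
  intro t ht
  induction t with
  | zero => rw [Nat.le_zero.1 ht]
  | succ t ih =>
    by_cases h' : m ≤ t
    · have := ih h'
      rw [advrun, this, h]
    · have : m = t + 1 := by omega
      rw [this]

lemma advrun_agree (n : ℕ)
    (alg : List Bool → (Finset (Fin n) × Finset (Fin n)) ⊕ Finset (Fin n))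
    {M : List (Fin n)} (hM : M.Nodup) (hpre : ∀ t, (advrun n alg t).2 <+: M) :
    ∀ t, transcript n (asucc n M) alg t = (advrun n alg t).1 := by
  intro t
  induction t with
  | zero => rfl
  | succ t ih =>
    rcases ha : alg (advrun n alg t).1 with q | W
    · obtain ⟨b, h1, _, hb⟩ := (advrun_step n alg t).2 q ha
      rw [transcript]
      simp only [ih, ha]
      rw [h1, hb M hM (hpre (t+1))]
    · rw [transcript]
      simp only [ih, ha]
      rw [(advrun_step n alg t).1 W ha]

/-- adversary lower bound: any deterministic algorithm that, on every
consistent strict total order, outputs only Condorcet winning teams must on some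
order perform at least n − 2k duels before outputting. -/
theorem stmt15 (n k : ℕ) (hk : 1 ≤ k) (hkn : 2*k ≤ n)
    (alg : List Bool → (Finset (Fin n) × Finset (Fin n)) ⊕ Finset (Fin n))
    (hcorrect : ∀ succ : Finset (Fin n) → Finset (Fin n) → Prop,
      GroundOrder n k succ →
      ∀ (m : ℕ) (W : Finset (Fin n)), alg (transcript n succ alg m) = Sum.inr W →
        W.card = k ∧ ∀ B : Finset (Fin n), B.card = k → Disjoint W B → succ W B) :
    ∃ succ : Finset (Fin n) → Finset (Fin n) → Prop, GroundOrder n k succ ∧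
      ∀ (m : ℕ) (W : Finset (Fin n)), alg (transcript n succ alg m) = Sum.inr W →
        n - 2*k ≤ (transcript n succ alg m).length := by
  classical
  have hFn : ∀ t, (advrun n alg t).2.length ≤ n := fun t => by
    simpa using (advrun_nodup n alg t).length_le_card
  obtain ⟨T, hT⟩ : ∃ T, ∀ t, (advrun n alg t).2.length ≤ (advrun n alg T).2.length := by
    obtain ⟨T, hT⟩ : ∃ t, (advrun n alg t).2.length =
        Nat.findGreatest (fun c => ∃ t, (advrun n alg t).2.length = c) n :=
      Nat.findGreatest_spec (P := fun c => ∃ t, (advrun n alg t).2.length = c) (hFn 0) ⟨0, rfl⟩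
    exact ⟨T, fun t => by rw [hT]; exact Nat.le_findGreatest (hFn t) ⟨t, rfl⟩⟩
  have hstab : ∀ t, T ≤ t → (advrun n alg t).2 = (advrun n alg T).2 := by
    intro t ht
    have hp := advrun_prefix n alg ht
    exact (hp.eq_of_length (le_antisymm hp.length_le (hT t))).symm
  have hpreAll : ∀ t, (advrun n alg t).2 <+: (advrun n alg T).2 := by
    intro t
    rcases le_total t T with h | h
    · exact advrun_prefix n alg h
    · rw [hstab t h]
  have hLfinNodup : (advrun n alg T).2.Nodup := advrun_nodup n alg T
  refine ⟨asucc n (advrun n alg T).2, asucc_groundOrder n k hLfinNodup, ?_⟩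
  intro m W hout
  have htr : transcript n (asucc n (advrun n alg T).2) alg m = (advrun n alg m).1 :=
    advrun_agree n alg hLfinNodup hpreAll m
  rw [htr] at hout ⊢
  by_contra hlen
  push_neg at hlen
  have hfreeze := advrun_frozen n alg hout
  have hLm : (advrun n alg T).2 = (advrun n alg m).2 := by
    rcases le_total T m with h | h
    · rw [hstab m h]
    · rw [hfreeze T h]
  have hcard : (advrun n alg T).2.length < n - 2*k :=
    lt_of_le_of_lt (by rw [hLm]; exact advrun_len n alg m) hlen
  obtain ⟨hWk, -⟩ := hcorrect (asucc n (advrun n alg T).2)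
    (asucc_groundOrder n k hLfinNodup) m W (by rw [htr]; exact hout)
  have hWne : W.Nonempty := by rw [← Finset.card_pos, hWk]; omega
  obtain ⟨L', hL'nodup, hpre', hwme, hL'len⟩ :
      ∃ L' : List (Fin n), L'.Nodup ∧ (∀ t, (advrun n alg t).2 <+: L') ∧
        (∃ w ∈ W, w ∈ L') ∧ L'.length ≤ n - 2*k := by
    by_cases hWL : ∀ w ∈ W, w ∉ (advrun n alg T).2
    · obtain ⟨w, hw⟩ := hWne
      refine ⟨(advrun n alg T).2 ++ [w], ?_,
        fun t => (hpreAll t).trans (List.prefix_append _ _), ⟨w, hw, by simp⟩, ?_⟩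
      · simpa [List.nodup_append] using ⟨hLfinNodup, fun a ha h => hWL w hw (h ▸ ha)⟩
      · simp only [List.length_append, List.length_singleton]; omega
    · push_neg at hWL
      obtain ⟨w, hwW, hwL⟩ := hWL
      exact ⟨(advrun n alg T).2, hLfinNodup, hpreAll, ⟨w, hwW, hwL⟩, by omega⟩
  obtain ⟨w, hwW, hwL'⟩ := hwme
  have htr' : transcript n (asucc n L') alg m = (advrun n alg m).1 :=
    advrun_agree n alg hL'nodup hpre' m
  obtain ⟨-, hWall⟩ := hcorrect (asucc n L') (asucc_groundOrder n k hL'nodup) m W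
    (by rw [htr']; exact hout)
  -- choose B of size k disjoint from W and from L'
  have hL'card : L'.toFinset.card ≤ n - 2*k :=
    le_trans (List.toFinset_card_le _) hL'len
  have hbig : k ≤ (Finset.univ \ (W ∪ L'.toFinset)).card := by
    have h1 : (W ∪ L'.toFinset).card ≤ k + (n - 2*k) := by
      have := Finset.card_union_le W L'.toFinset
      omega
    have h2 : (Finset.univ \ (W ∪ L'.toFinset)).card
        = n - (W ∪ L'.toFinset).card := by
      rw [Finset.card_sdiff_of_subset (Finset.subset_univ _)]
      simp
    omega
  obtain ⟨B, hBsub, hBcard⟩ := Finset.exists_subset_card_eq hbig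
  have hBprop : ∀ b ∈ B, b ∉ W ∧ b ∉ L' := by
    intro b hb
    have := hBsub hb
    simp only [Finset.mem_sdiff, Finset.mem_union, List.mem_toFinset] at this
    exact ⟨fun h => this.2 (Or.inl h), fun h => this.2 (Or.inr h)⟩
  have hBW : Disjoint W B := by
    rw [Finset.disjoint_right]
    intro b hb
    exact (hBprop b hb).1
  have hsucc1 : asucc n L' W B := hWall B hBcard hBW
  -- the best player of B ∪ W is in W, so B beats W : contradiction
  obtain ⟨z, hzmem, hzmin⟩ := Finset.exists_min_image (B ∪ W) (rkOf n L')
    ⟨w, Finset.mem_union_right _ hwW⟩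
  have hlenL' : L'.length ≤ n := by simpa using hL'nodup.length_le_card
  have hrkw : rkOf n L' w < n := by
    unfold rkOf
    rw [if_pos hwL']
    exact lt_of_lt_of_le (List.idxOf_lt_length_iff.2 hwL') hlenL'
  have hzW : z ∈ W := by
    rcases Finset.mem_union.1 hzmem with hzB | hzW
    · exfalso
      have hzL' : z ∉ L' := (hBprop z hzB).2
      have : rkOf n L' z = n + z.val := by unfold rkOf; rw [if_neg hzL']
      have hle := hzmin w (Finset.mem_union_right _ hwW)
      omega
    · exact hzW
  have hzB : z ∉ B := (Finset.disjoint_left.1 hBW hzW)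
  have hsucc2 : asucc n L' B W := by
    rw [asucc_iff_of_min n hL'nodup (A := B) (B := W) (z := z)
      (Finset.mem_symmDiff.2 (Or.inr ⟨hzW, hzB⟩)) ?_]
    · exact hzW
    · intro v hv
      apply hzmin
      rcases Finset.mem_symmDiff.1 hv with ⟨h1, _⟩ | ⟨h1, _⟩
      · exact Finset.mem_union_left _ h1
      · exact Finset.mem_union_right _ h1
  exact lt_asymm hsucc1 hsucc2
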